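/- arXiv:2404.12648 — 6 statements merged into one kernel-verified Lean document; each statement's English description precedes it below -/
import Mathlib

section
/- For any sequence of positive reals $x_1, \dots, x_n$, it holds that $\frac{\sum_{i=1}^n x_i}{\sqrt{\sum_{i=1}^n i x_i^2}} \leq \sqrt{1 + \log n}$. -/
/-- For any sequence of positive reals `x₁, …, xₙ`,
`(∑ i, xᵢ) / √(∑ i, i * xᵢ²) ≤ √(1 + log n)`. -/
theorem stmt_0 (n : ℕ) (hn : 1 ≤ n) (x : Fin n → ℝ) (hx : ∀ i, 0 < x i) :
    (∑ i : Fin n, x i) / Real.sqrt (∑ i : Fin n, ((i : ℕ) + 1 : ℝ) * x i ^ 2) ≤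
      Real.sqrt (1 + Real.log n) := by
  set S := ∑ i : Fin n, x i with hS
  set Q := ∑ i : Fin n, ((i : ℕ) + 1 : ℝ) * x i ^ 2 with hQ
  have hQpos : 0 < Q := by
    apply Finset.sum_pos
    · intro i _
      have := hx i
      positivity
    · exact Finset.univ_nonempty_iff.mpr ⟨⟨0, hn⟩⟩
  have hSpos : 0 ≤ S := Finset.sum_nonneg fun i _ => (hx i).le
  -- Cauchy-Schwarz
  have hCS : S ^ 2 ≤ (∑ i : Fin n, (((i : ℕ) + 1 : ℝ))⁻¹) * Q := by
    have := Finset.sum_mul_sq_le_sq_mul_sq Finset.univ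
      (fun i : Fin n => Real.sqrt (((i : ℕ) + 1 : ℝ))⁻¹)
      (fun i : Fin n => Real.sqrt (((i : ℕ) + 1 : ℝ)) * x i)
    have h1 : ∀ i : Fin n,
        Real.sqrt (((i : ℕ) + 1 : ℝ))⁻¹ * (Real.sqrt (((i : ℕ) + 1 : ℝ)) * x i) = x i := by
      intro i
      rw [← mul_assoc, ← Real.sqrt_mul (by positivity), inv_mul_cancel₀ (by positivity),
        Real.sqrt_one, one_mul]
    have h2 : ∀ i : Fin n, Real.sqrt (((i : ℕ) + 1 : ℝ))⁻¹ ^ 2 = (((i : ℕ) + 1 : ℝ))⁻¹ := by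
      intro i; rw [Real.sq_sqrt (by positivity)]
    have h3 : ∀ i : Fin n, (Real.sqrt (((i : ℕ) + 1 : ℝ)) * x i) ^ 2
        = ((i : ℕ) + 1 : ℝ) * x i ^ 2 := by
      intro i; rw [mul_pow, Real.sq_sqrt (by positivity)]
    simp only [h1, h2, h3] at this
    exact this
  have hH : (∑ i : Fin n, (((i : ℕ) + 1 : ℝ))⁻¹) ≤ 1 + Real.log n := by
    have := harmonic_le_one_add_log n
    have heq : ((harmonic n : ℚ) : ℝ) = ∑ i : Fin n, (((i : ℕ) + 1 : ℝ))⁻¹ := by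
      rw [harmonic]
      push_cast
      rw [Fin.sum_univ_eq_sum_range fun i => (((i : ℕ) : ℝ) + 1)⁻¹]
    rw [← heq]
    exact_mod_cast this
  have key : S ^ 2 ≤ (1 + Real.log n) * Q :=
    hCS.trans (mul_le_mul_of_nonneg_right hH hQpos.le)
  rw [div_le_iff₀ (Real.sqrt_pos.mpr hQpos)]
  calc S = Real.sqrt (S ^ 2) := by rw [Real.sqrt_sq hSpos]
    _ ≤ Real.sqrt ((1 + Real.log n) * Q) := Real.sqrt_le_sqrt key
    _ = Real.sqrt (1 + Real.log n) * Real.sqrt Q := Real.sqrt_mul (by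
        nlinarith [Real.sq_sqrt hQpos.le, Real.sqrt_nonneg Q, sq_nonneg S]) Q
end

section
/- Let $\{x_i\}_{i=1}^{t}$ be vectors in $\mathbb{R}^d$, let $\Lambda_0$ be a positive definite $d \times d$ matrix, and define $\Lambda_i = \Lambda_0 + \sum_{j=1}^{i-1} x_j x_j^\top$. Then $\sum_{i=1}^t \min\{\|x_i\|_{\Lambda_i^{-1}}^2, 1\} \leq 2 \log\left(\frac{\det \Lambda_{t+1}}{\det \Lambda_0}\right)$. -/
open Matrix

lemma vecMulVec_posSemidef {d : ℕ} (v : Fin d → ℝ) :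
    (Matrix.vecMulVec v v).PosSemidef := by
  rw [Matrix.posSemidef_iff_dotProduct_mulVec]
  constructor
  · ext i j
    simp [Matrix.vecMulVec_apply, Matrix.conjTranspose_apply, mul_comm]
  · intro y
    have h : ∀ i, (Matrix.vecMulVec v v *ᵥ y) i = v i * (v ⬝ᵥ y) := by
      intro i
      simp [Matrix.mulVec, Matrix.vecMulVec_apply, dotProduct, Finset.mul_sum, mul_assoc]
    have : star y ⬝ᵥ (Matrix.vecMulVec v v *ᵥ y) = (v ⬝ᵥ y) * (v ⬝ᵥ y) := by
      calc star y ⬝ᵥ (Matrix.vecMulVec v v *ᵥ y)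
          = ∑ i, y i * v i * (v ⬝ᵥ y) := by
            simp only [dotProduct, h]
            exact Finset.sum_congr rfl fun i _ => by simp [mul_assoc]
        _ = (∑ i, y i * v i) * (v ⬝ᵥ y) := by rw [Finset.sum_mul]
        _ = (v ⬝ᵥ y) * (v ⬝ᵥ y) := by
            congr 1
            simp [dotProduct, mul_comm]
    rw [this]
    exact mul_self_nonneg _

lemma min_le_two_log {u : ℝ} (hu : 0 ≤ u) : min u 1 ≤ 2 * Real.log (1 + u) := by
  have hpos : (0:ℝ) < 1 + u := by linarith
  have hlog : 1 - (1 + u)⁻¹ ≤ Real.log (1 + u) := Real.one_sub_inv_le_log_of_pos hpos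
  have key : min u 1 ≤ 2 * (1 - (1 + u)⁻¹) := by
    have hinv : (1 + u)⁻¹ * (1 + u) = 1 := inv_mul_cancel₀ hpos.ne'
    rcases le_total u 1 with h | h
    · rw [min_eq_left h]
      nlinarith [inv_nonneg.mpr hpos.le]
    · rw [min_eq_right h]
      nlinarith [inv_nonneg.mpr hpos.le]
  linarith

/-- Elliptical potential lemma: with `Λ i = Λ₀ + ∑_{j < i} x j x jᵀ` (so `Λ 0 = Λ₀`),
`∑_{i < t} min ‖x i‖²_{(Λ i)⁻¹} 1 ≤ 2 log (det (Λ t) / det Λ₀)`. -/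
theorem stmt_3 (d t : ℕ) (x : ℕ → Fin d → ℝ)
    (Λ₀ : Matrix (Fin d) (Fin d) ℝ) (hΛ₀ : Λ₀.PosDef)
    (Λ : ℕ → Matrix (Fin d) (Fin d) ℝ)
    (hΛ : ∀ i, Λ i = Λ₀ + ∑ j ∈ Finset.range i, Matrix.vecMulVec (x j) (x j)) :
    ∑ i ∈ Finset.range t, min (x i ⬝ᵥ ((Λ i)⁻¹ *ᵥ x i)) 1 ≤
      2 * Real.log ((Λ t).det / Λ₀.det) := by
  have hPD : ∀ i, (Λ i).PosDef := by
    intro i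
    rw [hΛ]
    refine hΛ₀.add_posSemidef ?_
    apply Finset.sum_induction _ Matrix.PosSemidef
    · intro a b ha hb; exact ha.add hb
    · exact Matrix.PosSemidef.zero
    · intro j _; exact vecMulVec_posSemidef (x j)
  set u : ℕ → ℝ := fun i => x i ⬝ᵥ ((Λ i)⁻¹ *ᵥ x i) with hu
  have hu_nonneg : ∀ i, 0 ≤ u i := by
    intro i
    have := ((hPD i).inv).posSemidef.dotProduct_mulVec_nonneg (x i)
    simpa using this
  have hdet_succ : ∀ i, (Λ (i + 1)).det = (Λ i).det * (1 + u i) := by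
    intro i
    have hstep : Λ (i + 1) = Λ i + Matrix.vecMulVec (x i) (x i) := by
      rw [hΛ, hΛ, Finset.sum_range_succ, add_assoc]
    rw [hstep, Matrix.vecMulVec_eq Unit,
      Matrix.det_add_replicateCol_mul_replicateRow (hPD i).det_pos.ne'.isUnit]
    congr 1
    rw [Matrix.det_unique]
    have : Matrix.replicateRow Unit (x i) * (Λ i)⁻¹ * Matrix.replicateCol Unit (x i)
        = Matrix.replicateRow Unit (x i) * Matrix.replicateCol Unit ((Λ i)⁻¹ *ᵥ x i) := by
      rw [Matrix.replicateCol_mulVec, Matrix.mul_assoc]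
    rw [this]
    simp [Matrix.add_apply, Matrix.one_apply, Matrix.replicateRow_mul_replicateCol_apply, hu]
  induction t with
  | zero =>
    simp [hΛ 0, div_self hΛ₀.det_pos.ne']
  | succ t ih =>
    rw [Finset.sum_range_succ]
    have hdetΛ₀ : 0 < Λ₀.det := hΛ₀.det_pos
    have hdett : 0 < (Λ t).det := (hPD t).det_pos
    have h1u : (0:ℝ) < 1 + u t := by have := hu_nonneg t; linarith
    have hlogsum : Real.log ((Λ (t+1)).det / Λ₀.det)
        = Real.log ((Λ t).det / Λ₀.det) + Real.log (1 + u t) := by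
      rw [hdet_succ t,
        show (Λ t).det * (1 + u t) / Λ₀.det = (Λ t).det / Λ₀.det * (1 + u t) by ring,
        Real.log_mul (div_pos hdett hdetΛ₀).ne' h1u.ne']
    have := min_le_two_log (hu_nonneg t)
    calc ∑ i ∈ Finset.range t, min (x i ⬝ᵥ ((Λ i)⁻¹ *ᵥ x i)) 1
          + min (x t ⬝ᵥ ((Λ t)⁻¹ *ᵥ x t)) 1
        ≤ 2 * Real.log ((Λ t).det / Λ₀.det) + 2 * Real.log (1 + u t) := by
          exact add_le_add ih this
      _ = 2 * Real.log ((Λ (t+1)).det / Λ₀.det) := by rw [hlogsum]; ring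
end

section
/- Let $\phi: \mathcal{S} \times \mathcal{A} \to \mathbb{R}^d$ be a feature mapping whose image spans $\mathbb{R}^d$. Then there exists an invertible linear transformation $A \in \mathbb{R}^{d \times d}$ such that for any bounded function $f: \mathcal{S} \times \mathcal{A} \to \mathbb{R}$ and vector $z \in \mathbb{R}^d$ satisfying $f(s,a) = \phi(s,a)^\top z$ for all $(s,a)$, one has $\|A \phi(s,a)\|_2 \leq 1$ for all $(s,a)$ and $\|A^{-1} z\|_2 \leq \sup_{s,a}|f(s,a)| \cdot \sqrt{d}$. -/
open Matrix

noncomputable def eNorm {d : ℕ} (v : Fin d → ℝ) : ℝ := Real.sqrt (∑ i, v i ^ 2)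

section ScalingAux

attribute [local instance] Matrix.normedAddCommGroup Matrix.normedSpace

variable {d : ℕ}

private lemma dot_self_eq (v : Fin d → ℝ) : v ⬝ᵥ v = ∑ i, v i ^ 2 := by
  simp [dotProduct, sq]

private lemma eNorm_eq (v : Fin d → ℝ) : eNorm v = Real.sqrt (v ⬝ᵥ v) := by
  rw [eNorm, dot_self_eq]

private lemma vecMulVec_mulVec (v w x : Fin d → ℝ) :
    vecMulVec v w *ᵥ x = (w ⬝ᵥ x) • v := by
  funext i
  simp only [mulVec, vecMulVec_apply, dotProduct, Pi.smul_apply, smul_eq_mul,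
    Finset.sum_mul]
  exact Finset.sum_congr rfl fun j _ => by ring

private lemma quad_linear (x : Fin d → ℝ) :
    IsLinearMap ℝ (fun N : Matrix (Fin d) (Fin d) ℝ => x ⬝ᵥ (N *ᵥ x)) :=
  ⟨fun A B => by simp [add_mulVec, dotProduct_add],
   fun c A => by simp [smul_mulVec, dotProduct_smul]⟩

private lemma quad_continuous (x : Fin d → ℝ) :
    Continuous fun N : Matrix (Fin d) (Fin d) ℝ => x ⬝ᵥ (N *ᵥ x) :=
  continuous_const.dotProduct (continuous_id.matrix_mulVec continuous_const)

private lemma quad_vecMulVec (v x : Fin d → ℝ) :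
    x ⬝ᵥ (vecMulVec v v *ᵥ x) = (v ⬝ᵥ x) ^ 2 := by
  rw [vecMulVec_mulVec, dotProduct_smul, smul_eq_mul, dotProduct_comm, sq]

private lemma trace_mul_vecMulVec (B : Matrix (Fin d) (Fin d) ℝ) (v : Fin d → ℝ) :
    (B * vecMulVec v v).trace = v ⬝ᵥ (B *ᵥ v) := by
  simp only [Matrix.trace, Matrix.diag, Matrix.mul_apply, vecMulVec_apply, mulVec,
    dotProduct, Finset.mul_sum]
  exact Finset.sum_congr rfl fun i _ => Finset.sum_congr rfl fun j _ => by ring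

/-- If `M` maximizes the determinant along segments towards `N`, then `tr (M⁻¹ N) ≤ d`. -/
private lemma key_trace (M N : Matrix (Fin d) (Fin d) ℝ) (hMdet : 0 < M.det)
    (h : ∀ t : ℝ, t ∈ Set.Icc (0:ℝ) 1 → (M + t • (N - M)).det ≤ M.det) :
    (M⁻¹ * N).trace ≤ (d : ℝ) := by
  have hunit : IsUnit M.det := isUnit_iff_ne_zero.mpr hMdet.ne'
  set B := M⁻¹ * (N - M) with hB
  set E := (Matrix.det (1 + (Polynomial.X : Polynomial ℝ) • B.map Polynomial.C)).divX.divX with hE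
  have hfact : ∀ t : ℝ, M + t • (N - M) = M * (1 + t • B) := by
    intro t
    rw [Matrix.mul_add, mul_one, Matrix.mul_smul, Matrix.mul_nonsing_inv_cancel_left _ _ hunit]
  have hstep : ∀ t : ℝ, t ∈ Set.Ioc (0:ℝ) 1 → B.trace ≤ -(E.eval t) * t := by
    intro t ht
    have h1 : (M * (1 + t • B)).det ≤ M.det := by
      rw [← hfact]; exact h t ⟨ht.1.le, ht.2⟩
    rw [det_mul] at h1
    have h2 : (1 + t • B).det ≤ 1 := by
      have h1' : M.det * (1 + t • B).det ≤ M.det * 1 := by simpa using h1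
      exact (mul_le_mul_iff_right₀ hMdet).mp h1'
    rw [Matrix.det_one_add_smul t B] at h2
    have h3 : B.trace * t ≤ (-(E.eval t) * t) * t := by nlinarith [ht.1]
    exact le_of_mul_le_mul_right h3 ht.1
  have hlim : Filter.Tendsto (fun t : ℝ => -(E.eval t) * t) (nhdsWithin 0 (Set.Ioi 0)) (nhds 0) := by
    have hc : Continuous fun t : ℝ => -(E.eval t) * t :=
      (E.continuous.neg).mul continuous_id
    have h2 := (hc.tendsto 0).mono_left (nhdsWithin_le_nhds (s := Set.Ioi 0))
    simpa using h2
  have htrB : B.trace ≤ 0 := by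
    refine ge_of_tendsto hlim ?_
    filter_upwards [Ioc_mem_nhdsGT_of_mem (by simp : (0:ℝ) ∈ Set.Ico (0:ℝ) 1)] with t ht
    exact hstep t ht
  have : B.trace = (M⁻¹ * N).trace - (d : ℝ) := by
    rw [hB, Matrix.mul_sub, trace_sub, Matrix.nonsing_inv_mul _ hunit, trace_one,
      Fintype.card_fin]
  linarith [this ▸ htrB]

end ScalingAux

attribute [local instance] Matrix.normedAddCommGroup Matrix.normedSpace

/-- Scaling lemma: for a bounded feature map `φ` whose image spans `ℝ^d`, there is an
invertible linear transformation `A` such that whenever a bounded function `f` satisfies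
`f p = φ(p)ᵀ z`, one has `‖A φ(p)‖ ≤ 1` for all `p` and `‖A⁻¹ z‖ ≤ sup |f| ⋅ √d`. -/
theorem stmt_6 {X : Type*} [Nonempty X] (d : ℕ)
    (φ : X → Fin d → ℝ)
    (hbdd : ∃ C : ℝ, ∀ p, eNorm (φ p) ≤ C)
    (hspan : Submodule.span ℝ (Set.range φ) = ⊤) :
    ∃ A : Matrix (Fin d) (Fin d) ℝ, A.det ≠ 0 ∧
      ∀ (f : X → ℝ) (z : Fin d → ℝ), (∀ p, f p = φ p ⬝ᵥ z) →
        (∀ p, eNorm (A *ᵥ φ p) ≤ 1) ∧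
          eNorm (A⁻¹ *ᵥ z) ≤ (⨆ p, |f p|) * Real.sqrt d := by
  classical
  obtain ⟨C, hC⟩ := hbdd
  rcases Nat.eq_zero_or_pos d with hd0 | hd
  · subst hd0
    exact ⟨1, by simp, fun f z hf => ⟨fun p => by simp [eNorm], by simp [eNorm]⟩⟩
  have hdR : (0:ℝ) < (d:ℝ) := by exact_mod_cast hd
  have hC0 : 0 ≤ C := le_trans (Real.sqrt_nonneg _) (hC (Classical.arbitrary X))
  have habs : ∀ p i, |φ p i| ≤ C := by
    intro p i
    have h1 : |φ p i| = Real.sqrt ((φ p i) ^ 2) := (Real.sqrt_sq_eq_abs _).symm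
    rw [h1]
    refine le_trans (Real.sqrt_le_sqrt ?_) (hC p)
    exact Finset.single_le_sum (fun j _ => sq_nonneg (φ p j)) (Finset.mem_univ i)
  -- the set of outer products and its closed convex hull
  set S : Set (Matrix (Fin d) (Fin d) ℝ) := Set.range fun p => vecMulVec (φ p) (φ p) with hSdef
  set K : Set (Matrix (Fin d) (Fin d) ℝ) := closure (convexHull ℝ S) with hKdef
  have hSb : Bornology.IsBounded S := by
    rw [isBounded_iff_forall_norm_le]
    refine ⟨C * C, ?_⟩
    rintro _ ⟨p, rfl⟩
    rw [Matrix.norm_le_iff (mul_nonneg hC0 hC0)]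
    intro i j
    simp only [vecMulVec_apply, Real.norm_eq_abs, abs_mul]
    exact mul_le_mul (habs p i) (habs p j) (abs_nonneg _) hC0
  have hKcomp : IsCompact K := by
    have h1 : Bornology.IsBounded (convexHull ℝ S) := isBounded_convexHull.mpr hSb
    exact Metric.isCompact_of_isClosed_isBounded isClosed_closure h1.closure
  have hKconv : Convex ℝ K := (convex_convexHull ℝ S).closure
  -- all elements of the hull are positive semidefinite
  have hSP : S ⊆ {N : Matrix (Fin d) (Fin d) ℝ | N.PosSemidef} := by
    rintro _ ⟨p, rfl⟩
    refine Matrix.PosSemidef.of_dotProduct_mulVec_nonneg ?_ fun x => ?_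
    · ext i j
      simp [conjTranspose_apply, vecMulVec_apply, mul_comm]
    · have hsx : star x = x := by simp
      rw [hsx, quad_vecMulVec]
      exact sq_nonneg _
  have hPconv : Convex ℝ {N : Matrix (Fin d) (Fin d) ℝ | N.PosSemidef} := by
    intro A hA B hB a b ha hb hab
    refine Matrix.PosSemidef.of_dotProduct_mulVec_nonneg ?_ fun x => ?_
    · show (a • A + b • B)ᴴ = a • A + b • B
      rw [conjTranspose_add, conjTranspose_smul, conjTranspose_smul, hA.1, hB.1,
        star_trivial, star_trivial]
    · simp only [add_mulVec, smul_mulVec, dotProduct_add, dotProduct_smul, smul_eq_mul]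
      exact add_nonneg (mul_nonneg ha (hA.dotProduct_mulVec_nonneg x)) (mul_nonneg hb (hB.dotProduct_mulVec_nonneg x))
  have hPclosed : IsClosed {N : Matrix (Fin d) (Fin d) ℝ | N.PosSemidef} := by
    have heq : {N : Matrix (Fin d) (Fin d) ℝ | N.PosSemidef}
        = {N : Matrix (Fin d) (Fin d) ℝ | Nᴴ = N}
          ∩ ⋂ x : Fin d → ℝ, {N : Matrix (Fin d) (Fin d) ℝ | 0 ≤ star x ⬝ᵥ (N *ᵥ x)} := by
      ext N
      simp only [Set.mem_setOf_eq, Set.mem_inter_iff, Set.mem_iInter]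
      exact Matrix.posSemidef_iff_dotProduct_mulVec
    rw [heq]
    refine IsClosed.inter (isClosed_eq continuous_id.matrix_conjTranspose continuous_id) ?_
    exact isClosed_iInter fun x => isClosed_le continuous_const (quad_continuous (star x))
  have hhullP : convexHull ℝ S ⊆ {N : Matrix (Fin d) (Fin d) ℝ | N.PosSemidef} :=
    convexHull_min hSP hPconv
  have hKP : ∀ N ∈ K, N.PosSemidef := fun N hN => closure_minimal hhullP hPclosed hN
  -- a positive definite element of the hull
  obtain ⟨b, hbsub, hbspan, hbind⟩ := exists_linearIndependent ℝ (Set.range φ)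
  rw [hspan] at hbspan
  have hbfin : b.Finite := hbind.setFinite
  set t : Finset (Fin d → ℝ) := hbfin.toFinset with htdef
  have htspan : Submodule.span ℝ (t : Set (Fin d → ℝ)) = ⊤ := by
    rw [htdef, hbfin.coe_toFinset]; exact hbspan
  have htsub : ∀ v ∈ t, v ∈ Set.range φ := fun v hv => hbsub (hbfin.mem_toFinset.mp hv)
  have htne : t.Nonempty := by
    by_contra hne
    rw [Finset.not_nonempty_iff_eq_empty] at hne
    rw [hne] at htspan
    simp only [Finset.coe_empty, Submodule.span_empty] at htspan
    haveI : Nonempty (Fin d) := ⟨⟨0, hd⟩⟩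
    exact absurd htspan bot_ne_top
  have htcard : (0:ℝ) < (t.card : ℝ) := by exact_mod_cast Finset.card_pos.mpr htne
  set M₀ : Matrix (Fin d) (Fin d) ℝ :=
    t.centerMass (fun _ => (1:ℝ)) (fun v => vecMulVec v v) with hM₀def
  have hM₀mem : M₀ ∈ convexHull ℝ S := by
    refine t.centerMass_mem_convexHull (fun i _ => zero_le_one) ?_ ?_
    · simpa using htcard
    · intro v hv
      obtain ⟨p, hp⟩ := htsub v hv
      exact ⟨p, by simp [hp]⟩
  have hM₀eq : M₀ = (t.card : ℝ)⁻¹ • ∑ v ∈ t, vecMulVec v v := by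
    rw [hM₀def, Finset.centerMass]
    simp
  have hquadM₀ : ∀ x : Fin d → ℝ,
      x ⬝ᵥ (M₀ *ᵥ x) = (t.card : ℝ)⁻¹ * ∑ v ∈ t, (v ⬝ᵥ x) ^ 2 := by
    intro x
    rw [hM₀eq, smul_mulVec, dotProduct_smul, smul_eq_mul]
    congr 1
    have hmap := map_sum (IsLinearMap.mk' _ (quad_linear x)) (fun v => vecMulVec v v) t
    simp only [IsLinearMap.mk'_apply] at hmap
    rw [hmap]
    exact Finset.sum_congr rfl fun v _ => quad_vecMulVec v x
  have hM₀PD : M₀.PosDef := by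
    refine Matrix.PosDef.of_dotProduct_mulVec_pos (hhullP hM₀mem).1 fun x hx => ?_
    have hsx : star x = x := by simp
    rw [hsx, hquadM₀]
    refine mul_pos (inv_pos.mpr htcard) ?_
    rcases (Finset.sum_nonneg fun v _ => sq_nonneg (v ⬝ᵥ x)).lt_or_eq with hlt | heq
    · exact hlt
    · exfalso
      have hall : ∀ v ∈ t, v ⬝ᵥ x = 0 := by
        intro v hv
        have := (Finset.sum_eq_zero_iff_of_nonneg
          (fun v _ => sq_nonneg (v ⬝ᵥ x))).mp heq.symm v hv
        exact pow_eq_zero_iff (two_ne_zero) |>.mp this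
      have hx0 : x ⬝ᵥ x = 0 := by
        have hmem : x ∈ Submodule.span ℝ (t : Set (Fin d → ℝ)) := by
          rw [htspan]; exact Submodule.mem_top
        refine Submodule.span_induction (p := fun y _ => y ⬝ᵥ x = 0)
          (fun y hy => hall y hy) (by simp) ?_ ?_ hmem
        · intro u v hu hv h1 h2
          rw [add_dotProduct, h1, h2, add_zero]
        · intro a u hu h1
          rw [smul_dotProduct, h1, smul_zero]
      apply hx
      funext i
      have hnn : ∀ j ∈ Finset.univ, (0:ℝ) ≤ x j ^ 2 := fun j _ => sq_nonneg _
      have := (Finset.sum_eq_zero_iff_of_nonneg hnn).mp (by rw [← dot_self_eq, hx0]) i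
        (Finset.mem_univ i)
      simpa using pow_eq_zero_iff (two_ne_zero) |>.mp this
  -- maximize the determinant over K
  obtain ⟨M, hMK, hMmax⟩ := hKcomp.exists_isMaxOn ⟨M₀, subset_closure hM₀mem⟩
    (continuous_id.matrix_det.continuousOn)
  have hMPSD : M.PosSemidef := hKP M hMK
  have hMdet : 0 < M.det := lt_of_lt_of_le hM₀PD.det_pos (hMmax (subset_closure hM₀mem))
  have hMunit : IsUnit M.det := isUnit_iff_ne_zero.mpr hMdet.ne'
  -- the trace bound
  have htr : ∀ N ∈ K, (M⁻¹ * N).trace ≤ (d : ℝ) := by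
    intro N hN
    refine key_trace M N hMdet fun s hs => ?_
    have hmem : M + s • (N - M) ∈ K := by
      have h2 := hKconv hMK hN (by linarith [hs.2] : (0:ℝ) ≤ 1 - s) hs.1 (by ring)
      convert h2 using 1
      module
    exact hMmax hmem
  have hquadbound : ∀ p, φ p ⬝ᵥ (M⁻¹ *ᵥ φ p) ≤ (d : ℝ) := by
    intro p
    have := htr _ (subset_closure (subset_convexHull ℝ S ⟨p, rfl⟩))
    rwa [trace_mul_vecMulVec] at this
  -- the square root of M
  open scoped MatrixOrder in
  set R : Matrix (Fin d) (Fin d) ℝ := CFC.sqrt M with hRdef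
  have hRPSD : R.PosSemidef := by open scoped MatrixOrder in exact (CFC.sqrt_nonneg M).posSemidef
  have hRR : R * R = M := by open scoped MatrixOrder in exact CFC.sqrt_mul_sqrt_self M hMPSD.nonneg
  have hRdet : R.det ≠ 0 := by
    intro h
    have := hMdet
    rw [← hRR, det_mul, h, mul_zero] at this
    exact lt_irrefl _ this
  have hRunit : IsUnit R.det := isUnit_iff_ne_zero.mpr hRdet
  have hRsym : Rᵀ = R := by
    have h1 : Rᴴ = Rᵀ := by ext i j; simp [conjTranspose_apply]
    rw [← h1, hRPSD.1]
  have hRinvsym : (R⁻¹)ᵀ = R⁻¹ := by rw [transpose_nonsing_inv, hRsym]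
  have hMinv : R⁻¹ * R⁻¹ = M⁻¹ := by rw [← hRR, Matrix.mul_inv_rev]
  set c : ℝ := Real.sqrt d with hcdef
  have hc : 0 < c := Real.sqrt_pos.mpr hdR
  have hcc : c * c = (d : ℝ) := Real.mul_self_sqrt hdR.le
  refine ⟨c⁻¹ • R⁻¹, ?_, ?_⟩
  · rw [det_smul]
    refine mul_ne_zero (pow_ne_zero _ (inv_ne_zero hc.ne')) ?_
    rw [Matrix.det_nonsing_inv]
    simpa using inv_ne_zero hRdet
  intro f z hf
  have hAinv : (c⁻¹ • R⁻¹)⁻¹ = c • R := by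
    apply Matrix.inv_eq_right_inv
    rw [Matrix.smul_mul, Matrix.mul_smul, smul_smul, Matrix.nonsing_inv_mul _ hRunit,
      inv_mul_cancel₀ hc.ne', one_smul]
  -- a generic computation: (B *ᵥ v) ⬝ᵥ (B *ᵥ v) = v ⬝ᵥ ((B * B) *ᵥ v) for symmetric B
  have hdotsq : ∀ (B : Matrix (Fin d) (Fin d) ℝ), Bᵀ = B → ∀ v : Fin d → ℝ,
      (B *ᵥ v) ⬝ᵥ (B *ᵥ v) = v ⬝ᵥ ((B * B) *ᵥ v) := by
    intro B hBsym v
    have hvm : (B *ᵥ v) ᵥ* B = (B * B) *ᵥ v := by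
      conv_lhs => rw [← hBsym]
      rw [Matrix.vecMul_transpose, mulVec_mulVec, hBsym]
    rw [dotProduct_mulVec, hvm, dotProduct_comm]
  constructor
  · intro p
    rw [eNorm_eq, smul_mulVec, smul_dotProduct, dotProduct_smul, smul_eq_mul,
      smul_eq_mul]
    have h1 : (R⁻¹ *ᵥ φ p) ⬝ᵥ (R⁻¹ *ᵥ φ p) = φ p ⬝ᵥ (M⁻¹ *ᵥ φ p) := by
      rw [hdotsq R⁻¹ hRinvsym, hMinv]
    rw [h1]
    rw [Real.sqrt_le_one]
    have hq0 : 0 ≤ φ p ⬝ᵥ (M⁻¹ *ᵥ φ p) := by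
      rw [← hMinv, ← hdotsq R⁻¹ hRinvsym, dot_self_eq]
      exact Finset.sum_nonneg fun i _ => sq_nonneg _
    have : c⁻¹ * (c⁻¹ * (φ p ⬝ᵥ (M⁻¹ *ᵥ φ p))) = (φ p ⬝ᵥ (M⁻¹ *ᵥ φ p)) / (d:ℝ) := by
      rw [← hcc]; field_simp
    rw [this]
    exact (div_le_one hdR).mpr (hquadbound p)
  · -- second bound
    set Mf : ℝ := ⨆ p, |f p| with hMfdef
    have hBdd : BddAbove (Set.range fun p => |f p|) := by
      refine ⟨C * ∑ i, |z i|, ?_⟩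
      rintro _ ⟨p, rfl⟩
      show |f p| ≤ C * ∑ i, |z i|
      rw [hf p]
      calc |φ p ⬝ᵥ z| ≤ ∑ i, |φ p i * z i| := by
              exact Finset.abs_sum_le_sum_abs _ _
        _ ≤ ∑ i, C * |z i| := by
              refine Finset.sum_le_sum fun i _ => ?_
              rw [abs_mul]
              exact mul_le_mul_of_nonneg_right (habs p i) (abs_nonneg _)
        _ = C * ∑ i, |z i| := by rw [Finset.mul_sum]
    have hfle : ∀ p, |f p| ≤ Mf := fun p => le_ciSup hBdd p
    have hMf0 : 0 ≤ Mf := le_trans (abs_nonneg _) (hfle (Classical.arbitrary X))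
    have hzMz : z ⬝ᵥ (M *ᵥ z) ≤ Mf ^ 2 := by
      have hSH : S ⊆ {N : Matrix (Fin d) (Fin d) ℝ | z ⬝ᵥ (N *ᵥ z) ≤ Mf ^ 2} := by
        rintro _ ⟨p, rfl⟩
        show z ⬝ᵥ (vecMulVec (φ p) (φ p) *ᵥ z) ≤ Mf ^ 2
        rw [quad_vecMulVec, ← hf p]
        calc f p ^ 2 = |f p| ^ 2 := (sq_abs _).symm
          _ ≤ Mf ^ 2 := pow_le_pow_left₀ (abs_nonneg _) (hfle p) 2
      have hHconv : Convex ℝ {N : Matrix (Fin d) (Fin d) ℝ | z ⬝ᵥ (N *ᵥ z) ≤ Mf ^ 2} :=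
        convex_halfSpace_le (quad_linear z) _
      have hHclosed : IsClosed {N : Matrix (Fin d) (Fin d) ℝ | z ⬝ᵥ (N *ᵥ z) ≤ Mf ^ 2} :=
        isClosed_le (quad_continuous z) continuous_const
      exact closure_minimal (convexHull_min hSH hHconv) hHclosed hMK
    rw [hAinv, eNorm_eq, smul_mulVec, smul_dotProduct, dotProduct_smul, smul_eq_mul,
      smul_eq_mul]
    have h2 : (R *ᵥ z) ⬝ᵥ (R *ᵥ z) = z ⬝ᵥ (M *ᵥ z) := by rw [hdotsq R hRsym, hRR]
    rw [h2]
    have h3 : c * (c * (z ⬝ᵥ (M *ᵥ z))) ≤ (Mf * c) ^ 2 := by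
      have : (Mf * c) ^ 2 = c * (c * Mf ^ 2) := by ring
      rw [this]
      exact mul_le_mul_of_nonneg_left (mul_le_mul_of_nonneg_left hzMz hc.le) hc.le
    calc Real.sqrt (c * (c * (z ⬝ᵥ (M *ᵥ z)))) ≤ Real.sqrt ((Mf * c) ^ 2) :=
          Real.sqrt_le_sqrt h3
      _ = Mf * c := Real.sqrt_sq (mul_nonneg hMf0 hc.le)
end

section
/- Under the same setup as the distributional-Eluder pigeon-hole lemma (sequences $\{\phi_k\} \subset \Phi$ with $|\phi| \leq C$ and $\{\mu_k\} \subset \Gamma$ with $\sum_{t=1}^{k-1}(\mathbb{E}_{\mu_t}[\phi_k])^2 \leq \beta$ for all $k \in [K]$, and $d = \mathrm{dim}_{DE}(\Phi,\Gamma,\epsilon)$), the squared version holds: $\sum_{t=1}^K (\mathbb{E}_{\mu_t}[\phi_t])^2 \leq d \beta \log K + \min\{K, d\} C^2 + K \epsilon^2$. -/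
open MeasureTheory

lemma pade_aux {x : ℝ} (h0 : 0 ≤ x) (h1 : x ≤ 1) : (2 - x) * Real.exp x ≤ 2 + x := by
  have h := Real.exp_bound' h0 h1 (n := 4) (by norm_num)
  simp only [Finset.sum_range_succ, Finset.sum_range_zero] at h
  norm_num [Nat.factorial] at h
  nlinarith [pow_nonneg h0 3, pow_nonneg h0 4, pow_nonneg h0 5, Real.exp_pos x]

lemma harmonic_le_log (n : ℕ) :
    ∑ m ∈ Finset.Icc 1 n, (1 : ℝ) / m ≤ Real.log (2 * n + 1) := by
  induction n with
  | zero => simp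
  | succ n ih =>
    rw [Finset.sum_Icc_succ_top (by norm_num)]
    have hx0 : (0:ℝ) ≤ 1 / (n + 1) := by positivity
    have hx1 : (1:ℝ) / (n + 1) ≤ 1 := by
      rw [div_le_one (by positivity)]; linarith [Nat.cast_nonneg (α := ℝ) n]
    have hp := pade_aux hx0 hx1
    have hx : (1/((n:ℝ)+1)) * ((n:ℝ)+1) = 1 := by field_simp
    have hmul := mul_le_mul_of_nonneg_right hp (show (0:ℝ) ≤ (n:ℝ)+1 by positivity)
    have hexp : Real.exp (1/((n:ℝ)+1)) ≤ (2*(n:ℝ)+3) / (2*(n:ℝ)+1) := by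
      rw [le_div_iff₀ (by positivity)]
      nlinarith [hmul, hx, Real.exp_pos (1/((n:ℝ)+1))]
    have hlog : (1:ℝ)/((n:ℝ)+1) ≤ Real.log ((2*(n:ℝ)+3)/(2*(n:ℝ)+1)) :=
      (Real.le_log_iff_exp_le (by positivity)).2 hexp
    rw [Real.log_div (by positivity) (by positivity)] at hlog
    push_cast
    have h3 : (2*((n:ℝ)+1)+1) = 2*(n:ℝ)+3 := by ring
    rw [h3]
    linarith

lemma bucket_assign {K L : ℕ} (hL : 0 < L) (P : Fin K → Prop) [DecidablePred P]
    (c : Fin K → Fin K → ℝ) (β a2 : ℝ)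
    (hβ : ∀ k, P k → ∑ s ∈ Finset.univ.filter (fun s => s < k ∧ P s), c k s ≤ β)
    (hLa : β ≤ L * a2) :
    ∃ b : Fin K → Fin L, ∀ k, P k →
      ∑ s ∈ Finset.univ.filter (fun s => s < k ∧ P s ∧ b s = b k), c k s ≤ a2 := by
  classical
  suffices h : ∀ N : ℕ, ∃ b : Fin K → Fin L, ∀ k : Fin K, (k : ℕ) < N → P k →
      ∑ s ∈ Finset.univ.filter (fun s => s < k ∧ P s ∧ b s = b k), c k s ≤ a2 by
    obtain ⟨b, hb⟩ := h K
    exact ⟨b, fun k hk => hb k k.isLt hk⟩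
  intro N
  induction N with
  | zero => exact ⟨fun _ => ⟨0, hL⟩, fun k hk => absurd hk (by omega)⟩
  | succ N ih =>
    obtain ⟨b, hb⟩ := ih
    by_cases hNK : N < K
    · set k0 : Fin K := ⟨N, hNK⟩ with hk0
      have hk0v : (k0 : ℕ) = N := rfl
      by_cases hP : P k0
      · have hex : ∃ l : Fin L,
            ∑ s ∈ Finset.univ.filter (fun s => s < k0 ∧ P s ∧ b s = l), c k0 s ≤ a2 := by
          by_contra hno
          push_neg at hno
          have h1 : (L : ℝ) * a2 <
              ∑ l : Fin L, ∑ s ∈ Finset.univ.filter (fun s => s < k0 ∧ P s ∧ b s = l), c k0 s := by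
            have hne : (Finset.univ : Finset (Fin L)).Nonempty := ⟨⟨0, hL⟩, Finset.mem_univ _⟩
            calc (L : ℝ) * a2 = ∑ _l : Fin L, a2 := by
                  simp [Finset.sum_const, mul_comm]
              _ < _ := Finset.sum_lt_sum_of_nonempty hne fun l _ => hno l
          have h2 : ∑ l : Fin L,
              ∑ s ∈ Finset.univ.filter (fun s => s < k0 ∧ P s ∧ b s = l), c k0 s
              = ∑ s ∈ Finset.univ.filter (fun s => s < k0 ∧ P s), c k0 s := by
            rw [← Finset.sum_fiberwise (Finset.univ.filter (fun s => s < k0 ∧ P s)) b (c k0)]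
            refine Finset.sum_congr rfl fun l _ => Finset.sum_congr ?_ fun _ _ => rfl
            rw [Finset.filter_filter]
            exact Finset.filter_congr fun s _ => by tauto
          have h3 := hβ k0 hP
          rw [h2] at h1
          linarith
        obtain ⟨l, hl⟩ := hex
        refine ⟨Function.update b k0 l, fun k hk hPk => ?_⟩
        rcases Nat.lt_succ_iff_lt_or_eq.mp hk with h | h
        · have hkk0 : k ≠ k0 := Fin.ne_of_val_ne (by omega)
          have heq : Finset.univ.filter
                (fun s => s < k ∧ P s ∧ Function.update b k0 l s = Function.update b k0 l k)
              = Finset.univ.filter (fun s => s < k ∧ P s ∧ b s = b k) := by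
            refine Finset.filter_congr fun s _ => ?_
            constructor
            · rintro ⟨h1, h2, h3⟩
              have hsv : (s : ℕ) < (k : ℕ) := h1
              have hsk0 : s ≠ k0 := Fin.ne_of_val_ne (by omega)
              rw [Function.update_of_ne hsk0, Function.update_of_ne hkk0] at h3
              exact ⟨h1, h2, h3⟩
            · rintro ⟨h1, h2, h3⟩
              have hsv : (s : ℕ) < (k : ℕ) := h1
              have hsk0 : s ≠ k0 := Fin.ne_of_val_ne (by omega)
              rw [Function.update_of_ne hsk0, Function.update_of_ne hkk0]
              exact ⟨h1, h2, h3⟩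
          rw [heq]
          exact hb k h hPk
        · have hkeq : k = k0 := Fin.ext h
          subst hkeq
          have heq : Finset.univ.filter
                (fun s => s < k0 ∧ P s ∧ Function.update b k0 l s = Function.update b k0 l k0)
              = Finset.univ.filter (fun s => s < k0 ∧ P s ∧ b s = l) := by
            refine Finset.filter_congr fun s _ => ?_
            rw [Function.update_self]
            constructor
            · rintro ⟨h1, h2, h3⟩
              rw [Function.update_of_ne (ne_of_lt h1)] at h3
              exact ⟨h1, h2, h3⟩
            · rintro ⟨h1, h2, h3⟩
              rw [Function.update_of_ne (ne_of_lt h1)]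
              exact ⟨h1, h2, h3⟩
          rw [heq]
          exact hl
      · refine ⟨b, fun k hk hPk => ?_⟩
        rcases Nat.lt_succ_iff_lt_or_eq.mp hk with h | h
        · exact hb k h hPk
        · exact absurd hPk (by rwa [show k = k0 from Fin.ext h])
    · exact ⟨b, fun k _ hPk => hb k (by omega) hPk⟩


open scoped Classical in
lemma count_lemma {X : Type*} [MeasurableSpace X]
    (Φ : Set (X → ℝ)) (Γ : Set (Measure X)) (β ε : ℝ) (d K : ℕ)
    (hdim : ∀ (n : ℕ) (ρ : Fin n → Measure X), (∀ i, ρ i ∈ Γ) →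
      (∃ ε' ≥ ε, ∀ i : Fin n, ∃ φ ∈ Φ,
        Real.sqrt (∑ j ∈ Finset.univ.filter (fun j => j < i), (∫ x, φ x ∂(ρ j)) ^ 2) ≤ ε' ∧
          ε' ≤ |∫ x, φ x ∂(ρ i)|) → n ≤ d)
    (φseq : Fin K → X → ℝ) (μseq : Fin K → Measure X)
    (hφ : ∀ k, φseq k ∈ Φ) (hμ : ∀ k, μseq k ∈ Γ)
    (hβ : ∀ k : Fin K,
      ∑ t ∈ Finset.univ.filter (fun t => t < k), (∫ x, φseq k x ∂(μseq t)) ^ 2 ≤ β)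
    (hβ0 : 0 ≤ β) (α : ℝ) (hα0 : 0 < α) (hαε : ε ≤ α) :
    (Finset.univ.filter (fun t : Fin K => α ≤ |∫ x, φseq t x ∂(μseq t)|)).card
      ≤ (max 1 ⌈β / α ^ 2⌉₊) * d := by
  set P : Fin K → Prop := fun t => α ≤ |∫ x, φseq t x ∂(μseq t)| with hP
  set L := max 1 ⌈β / α ^ 2⌉₊ with hLdef
  have hL : 0 < L := le_max_left 1 _
  have hLa : β ≤ L * α ^ 2 := by
    have h1 : β / α ^ 2 ≤ (⌈β / α ^ 2⌉₊ : ℝ) := Nat.le_ceil _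
    have h2 : (⌈β / α ^ 2⌉₊ : ℝ) ≤ L := by exact_mod_cast Nat.cast_le.mpr (le_max_right _ _)
    have h3 : β / α ^ 2 * α ^ 2 = β := by field_simp
    nlinarith [sq_nonneg α, pow_pos hα0 2]
  have hβ' : ∀ k, P k →
      ∑ s ∈ Finset.univ.filter (fun s => s < k ∧ P s), (∫ x, φseq k x ∂(μseq s)) ^ 2 ≤ β := by
    intro k _
    refine le_trans (Finset.sum_le_sum_of_subset_of_nonneg ?_ fun _ _ _ => sq_nonneg _) (hβ k)
    exact Finset.monotone_filter_right _ (fun s _ hs => hs.1)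
  obtain ⟨b, hb⟩ := bucket_assign hL P (fun k s => (∫ x, φseq k x ∂(μseq s)) ^ 2) β (α ^ 2) hβ' hLa
  have hfiber : ∀ l : Fin L, ((Finset.univ.filter P).filter (fun t => b t = l)).card ≤ d := by
    intro l
    set F := (Finset.univ.filter P).filter (fun t => b t = l) with hF
    set n := F.card with hn
    set emb := F.orderEmbOfFin (rfl : F.card = n) with hemb
    have hmem : ∀ i : Fin n, P (emb i) ∧ b (emb i) = l := by
      intro i
      have hmemi : emb i ∈ F := Finset.orderEmbOfFin_mem F rfl i
      have h2 := Finset.mem_filter.mp hmemi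
      exact ⟨(Finset.mem_filter.mp h2.1).2, h2.2⟩
    refine hdim n (fun i => μseq (emb i)) (fun i => hμ _) ⟨α, hαε, fun i => ?_⟩
    refine ⟨φseq (emb i), hφ _, ?_, hmem i |>.1⟩
    have hsum : ∑ j ∈ Finset.univ.filter (fun j => j < i),
          (∫ x, φseq (emb i) x ∂(μseq (emb j))) ^ 2
        = ∑ s ∈ Finset.univ.filter (fun s => s < emb i ∧ P s ∧ b s = b (emb i)),
            (∫ x, φseq (emb i) x ∂(μseq s)) ^ 2 := by
      refine Finset.sum_bij (fun j _ => emb j) ?_ ?_ ?_ ?_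
      · intro j hj
        simp only [Finset.mem_filter, Finset.mem_univ, true_and] at hj ⊢
        refine ⟨?_, (hmem j).1, by rw [(hmem j).2, (hmem i).2]⟩
        exact (OrderEmbedding.lt_iff_lt _).mpr hj
      · intro j1 h1 j2 h2 he
        exact (F.orderEmbOfFin (rfl : F.card = n)).injective he
      · intro s hs
        simp only [Finset.mem_filter, Finset.mem_univ, true_and] at hs
        obtain ⟨hs1, hs2, hs3⟩ := hs
        have hsF : s ∈ F := Finset.mem_filter.mpr
          ⟨Finset.mem_filter.mpr ⟨Finset.mem_univ s, hs2⟩, by rw [hs3, (hmem i).2]⟩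
        have hrange : s ∈ Set.range emb := by
          rw [hemb, Finset.range_orderEmbOfFin]
          exact hsF
        obtain ⟨j, hj⟩ := hrange
        refine ⟨j, ?_, hj⟩
        simp only [Finset.mem_filter, Finset.mem_univ, true_and]
        have hlt : emb j < emb i := by rw [hj]; exact hs1
        exact (OrderEmbedding.lt_iff_lt emb).mp hlt
      · intro j hj; rfl
    rw [hsum]
    have hble := hb (emb i) (hmem i).1
    calc Real.sqrt (∑ s ∈ Finset.univ.filter (fun s => s < emb i ∧ P s ∧ b s = b (emb i)),
            (∫ x, φseq (emb i) x ∂(μseq s)) ^ 2)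
        ≤ Real.sqrt (α ^ 2) := Real.sqrt_le_sqrt hble
      _ = α := Real.sqrt_sq hα0.le
  calc (Finset.univ.filter P).card
      = ∑ l : Fin L, ((Finset.univ.filter P).filter (fun t => b t = l)).card :=
        Finset.card_eq_sum_card_fiberwise fun x _ => Finset.mem_univ (b x)
    _ ≤ ∑ _l : Fin L, d := Finset.sum_le_sum fun l _ => hfiber l
    _ = L * d := by simp [Finset.sum_const, Finset.card_univ, mul_comm]


/-- Pigeon-hole principle for the distributional Eluder dimension (absolute-value
version, squared form): if every sequence of measures in `Γ` that is `ε'`-independent (for some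
`ε' ≥ ε`) w.r.t. `Φ` has length at most `d`, and
`∑_{t<k} (E_{μ_t}[φ_k])² ≤ β` for all `k ∈ [K]`, then
`∑_{t} |E_{μ_t}[φ_t]| ≤ 2√(dβK) + min{K,d} C + Kε`. -/
theorem stmt_12 {X : Type*} [MeasurableSpace X]
    (Φ : Set (X → ℝ)) (Γ : Set (Measure X)) (C β ε : ℝ) (d K : ℕ)
    (hC : ∀ φ ∈ Φ, ∀ x, |φ x| ≤ C)
    (hΓ : ∀ μ ∈ Γ, IsProbabilityMeasure μ)
    (hdim : ∀ (n : ℕ) (ρ : Fin n → Measure X), (∀ i, ρ i ∈ Γ) →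
      (∃ ε' ≥ ε, ∀ i : Fin n, ∃ φ ∈ Φ,
        Real.sqrt (∑ j ∈ Finset.univ.filter (fun j => j < i), (∫ x, φ x ∂(ρ j)) ^ 2) ≤ ε' ∧
          ε' ≤ |∫ x, φ x ∂(ρ i)|) → n ≤ d)
    (φseq : Fin K → X → ℝ) (μseq : Fin K → Measure X)
    (hφ : ∀ k, φseq k ∈ Φ) (hμ : ∀ k, μseq k ∈ Γ)
    (hβ : ∀ k : Fin K,
      ∑ t ∈ Finset.univ.filter (fun t => t < k), (∫ x, φseq k x ∂(μseq t)) ^ 2 ≤ β) :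
    ∑ t : Fin K, (∫ x, φseq t x ∂(μseq t)) ^ 2 ≤
      d * β * Real.log K + (min K d : ℕ) * C ^ 2 + K * ε ^ 2 := by
  classical
  rcases Nat.eq_zero_or_pos K with hK0 | hK
  · subst hK0
    simp
  haveI hprob : ∀ t, IsProbabilityMeasure (μseq t) := fun t => hΓ _ (hμ t)
  have hXne : Nonempty X := by
    by_contra hX
    rw [not_nonempty_iff] at hX
    have h1 : (μseq ⟨0, hK⟩) Set.univ = 1 := (hprob _).measure_univ
    rw [Set.univ_eq_empty_iff.mpr hX, measure_empty] at h1
    exact zero_ne_one h1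
  obtain ⟨x0⟩ := hXne
  have hC0 : 0 ≤ C := le_trans (abs_nonneg _) (hC (φseq ⟨0, hK⟩) (hφ _) x0)
  have hβ0 : 0 ≤ β := by
    have h := hβ ⟨0, hK⟩
    have hempty : Finset.univ.filter (fun t : Fin K => t < (⟨0, hK⟩ : Fin K)) = ∅ := by
      ext t
      simp [Fin.lt_def]
    rw [hempty, Finset.sum_empty] at h
    exact h
  set e : Fin K → ℝ := fun t => |∫ x, φseq t x ∂(μseq t)| with he
  have he0 : ∀ t, 0 ≤ e t := fun t => abs_nonneg _
  have heC : ∀ t, e t ≤ C := by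
    intro t
    have h := norm_integral_le_of_norm_le_const (μ := μseq t) (f := fun x => φseq t x) (C := C)
      (Filter.Eventually.of_forall fun x => hC (φseq t) (hφ t) x)
    simpa [Real.norm_eq_abs, measure_univ] using h
  have hsum_eq : ∑ t : Fin K, (∫ x, φseq t x ∂(μseq t)) ^ 2 = ∑ t : Fin K, e t ^ 2 := by
    refine Finset.sum_congr rfl fun t _ => ?_
    rw [he]
    rw [sq_abs]
  rw [hsum_eq]
  have hlogK : (0:ℝ) ≤ Real.log K := Real.log_nonneg (by exact_mod_cast hK)
  have hminC : (0:ℝ) ≤ ((min K d : ℕ) : ℝ) * C ^ 2 := by positivity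
  rcases le_or_gt d 1 with hd1 | hd2
  · -- degenerate case: every e t < ε
    have hsmall : ∀ t, e t < ε := by
      intro t
      by_contra hcon
      push_neg at hcon
      have h2 : 2 ≤ d := by
        refine hdim 2 (fun _ => μseq t) (fun _ => hμ t) ⟨e t, hcon, fun i => ?_⟩
        refine ⟨φseq t, hφ t, ?_, by simp [he]⟩
        have hsub : Finset.univ.filter (fun j : Fin 2 => j < i) ⊆ {0} := by
          intro j hj
          simp only [Finset.mem_filter, Finset.mem_univ, true_and, Fin.lt_def] at hj
          simp only [Finset.mem_singleton]
          have hi2 : (i : ℕ) < 2 := i.isLt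
          exact Fin.ext (by omega)
        have hsle : ∑ j ∈ Finset.univ.filter (fun j : Fin 2 => j < i),
            (∫ x, φseq t x ∂((fun _ : Fin 2 => μseq t) j)) ^ 2 ≤ e t ^ 2 := by
          calc ∑ j ∈ Finset.univ.filter (fun j : Fin 2 => j < i),
              (∫ x, φseq t x ∂((fun _ : Fin 2 => μseq t) j)) ^ 2
              = ∑ _j ∈ Finset.univ.filter (fun j : Fin 2 => j < i), e t ^ 2 :=
                Finset.sum_congr rfl fun j _ => by simp [he, sq_abs]
            _ ≤ ∑ _j ∈ ({0} : Finset (Fin 2)), e t ^ 2 :=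
                Finset.sum_le_sum_of_subset_of_nonneg hsub (fun _ _ _ => sq_nonneg _)
            _ = e t ^ 2 := by simp
        calc Real.sqrt (∑ j ∈ Finset.univ.filter (fun j : Fin 2 => j < i),
              (∫ x, φseq t x ∂((fun _ : Fin 2 => μseq t) j)) ^ 2)
            ≤ Real.sqrt (e t ^ 2) := Real.sqrt_le_sqrt hsle
          _ = e t := Real.sqrt_sq (he0 t)
      omega
    have hsum : ∑ t : Fin K, e t ^ 2 ≤ (K : ℝ) * ε ^ 2 := by
      calc ∑ t : Fin K, e t ^ 2 ≤ ∑ _t : Fin K, ε ^ 2 :=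
            Finset.sum_le_sum fun t _ => pow_le_pow_left₀ (he0 t) (hsmall t).le 2
        _ = (K : ℝ) * ε ^ 2 := by simp [mul_comm]
    have hdβ : (0:ℝ) ≤ (d : ℝ) * β * Real.log K := by positivity
    linarith
  · -- main case : d ≥ 2
    have hd0 : 0 < d := by omega
    set σ := Tuple.sort e with hσ
    have hmono : Monotone (e ∘ σ) := Tuple.monotone_sort e
    set v : Fin K → ℝ := e ∘ σ with hv
    have hv0 : ∀ j, 0 ≤ v j := fun j => he0 _
    have hsum2 : ∑ t : Fin K, e t ^ 2 = ∑ j : Fin K, v j ^ 2 :=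
      (Equiv.sum_comp σ (fun t => e t ^ 2)).symm
    have hpoint : ∀ j : Fin K, (j : ℕ) + d < K →
        v j ^ 2 ≤ ε ^ 2 + β / ((((K - 1 - (j : ℕ)) / d : ℕ)) : ℝ) := by
      intro j hj
      set m : ℕ := (K - 1 - (j : ℕ)) / d with hm
      have hm1 : 1 ≤ m := by
        rw [hm, Nat.le_div_iff_mul_le hd0]
        omega
      have hmKj : m * d < K - (j : ℕ) := by
        have h1 : m * d ≤ K - 1 - (j : ℕ) := by
          rw [hm]
          exact Nat.div_mul_le_self _ _
        omega
      have hβm : 0 ≤ β / (m : ℝ) := div_nonneg hβ0 (by positivity)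
      rcases le_or_gt (v j) ε with hve | hve
      · have hsq : v j ^ 2 ≤ ε ^ 2 := pow_le_pow_left₀ (hv0 j) hve 2
        linarith
      rcases le_or_gt (v j) 0 with hvz | hvz
      · have : v j = 0 := le_antisymm hvz (hv0 j)
        rw [this]
        nlinarith [sq_nonneg ε]
      have hcount := count_lemma Φ Γ β ε d K hdim φseq μseq hφ hμ hβ hβ0 (v j) hvz hve.le
      have hcard : K - (j : ℕ) ≤
          (Finset.univ.filter (fun t : Fin K => v j ≤ e t)).card := by
        have hsub : (Finset.univ.filter (fun i : Fin K => j ≤ i)).card ≤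
            (Finset.univ.filter (fun t : Fin K => v j ≤ e t)).card := by
          apply Finset.card_le_card_of_injOn σ
          · intro i hi
            simp only [Finset.coe_filter, Finset.mem_coe, Set.mem_setOf_eq, Finset.mem_filter, Finset.mem_univ, true_and] at hi ⊢
            exact hmono hi
          · exact Set.injOn_of_injective σ.injective
        have hIci : (Finset.univ.filter (fun i : Fin K => j ≤ i)) = Finset.Ici j := by
          ext i
          simp
        rw [hIci, Fin.card_Ici] at hsub
        exact hsub
      have hcount' : (Finset.univ.filter (fun t : Fin K => v j ≤ e t)).card
          ≤ (max 1 ⌈β / (v j) ^ 2⌉₊) * d := hcount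
      have hKj : K - (j : ℕ) ≤ (max 1 ⌈β / (v j) ^ 2⌉₊) * d := le_trans hcard hcount'
      have hmlt : m < max 1 ⌈β / (v j) ^ 2⌉₊ := by
        by_contra hcon
        push_neg at hcon
        have := Nat.mul_le_mul_right d hcon
        omega
      have hceil : m < ⌈β / (v j) ^ 2⌉₊ := by omega
      have hltr : (m : ℝ) < β / (v j) ^ 2 := Nat.lt_ceil.mp hceil
      have hvj2 : (0:ℝ) < v j ^ 2 := by positivity
      have hfin : v j ^ 2 < β / (m : ℝ) := by
        rw [lt_div_iff₀ (by exact_mod_cast Nat.cast_pos.mpr (by omega : 0 < m))]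
        rw [lt_div_iff₀ hvj2] at hltr
        nlinarith
      nlinarith [sq_nonneg ε]
    have hptC : ∀ j : Fin K, v j ^ 2 ≤ C ^ 2 := fun j => pow_le_pow_left₀ (hv0 j) (heC _) 2
    set G : ℕ → ℝ := fun i =>
      if i + d < K then ε ^ 2 + β / (((K - 1 - i) / d : ℕ) : ℝ) else C ^ 2 with hG
    have hbound : ∑ j : Fin K, v j ^ 2 ≤ ∑ j : Fin K, G (j : ℕ) := by
      refine Finset.sum_le_sum fun j _ => ?_
      simp only [hG]
      by_cases hj : (j : ℕ) + d < K
      · rw [if_pos hj]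
        exact hpoint j hj
      · rw [if_neg hj]
        exact hptC j
    have hrange : ∑ j : Fin K, G (j : ℕ) = ∑ i ∈ Finset.range K, G i :=
      Fin.sum_univ_eq_sum_range G K
    have hreflect : ∑ i ∈ Finset.range K, G i
        = ∑ i ∈ Finset.range K, G (K - 1 - i) := (Finset.sum_range_reflect G K).symm
    have hGval : ∀ i ∈ Finset.range K, G (K - 1 - i)
        = if d ≤ i then ε ^ 2 + β / ((i / d : ℕ) : ℝ) else C ^ 2 := by
      intro i hi
      rw [Finset.mem_range] at hi
      simp only [hG]
      by_cases hdi : d ≤ i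
      · rw [if_pos (by omega), if_pos hdi, show K - 1 - (K - 1 - i) = i from by omega]
      · rw [if_neg (by omega), if_neg hdi]
    -- split the reflected sum
    have hsplit : ∑ i ∈ Finset.range K, G (K - 1 - i)
        = (∑ i ∈ Finset.range K, (if d ≤ i then ε ^ 2 else C ^ 2))
          + ∑ i ∈ Finset.range K, (if d ≤ i then β / ((i / d : ℕ) : ℝ) else 0) := by
      rw [← Finset.sum_add_distrib]
      refine Finset.sum_congr rfl fun i hi => ?_
      rw [hGval i hi]
      by_cases hdi : d ≤ i
      · rw [if_pos hdi, if_pos hdi, if_pos hdi]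
      · rw [if_neg hdi, if_neg hdi, if_neg hdi, add_zero]
    -- first part
    have hfilter1 : (Finset.range K).filter (fun i => d ≤ i) = Finset.Ico d K := by
      ext i
      simp [Finset.mem_range, Finset.mem_Ico, and_comm]
    have hfilter2 : (Finset.range K).filter (fun i => ¬ d ≤ i) = Finset.range (min d K) := by
      ext i
      simp only [Finset.mem_filter, Finset.mem_range, not_le, Finset.mem_range, lt_min_iff]
      omega
    have hA : ∑ i ∈ Finset.range K, (if d ≤ i then ε ^ 2 else C ^ 2)
        ≤ (K : ℝ) * ε ^ 2 + ((min K d : ℕ) : ℝ) * C ^ 2 := by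
      rw [Finset.sum_ite, hfilter1, hfilter2]
      simp only [Finset.sum_const, Nat.card_Ico, Finset.card_range, nsmul_eq_mul]
      have h1 : ((K - d : ℕ) : ℝ) ≤ (K : ℝ) := by
        exact_mod_cast Nat.sub_le K d
      have h2 : (min d K) = (min K d) := Nat.min_comm d K
      rw [h2]
      have hε2 : (0:ℝ) ≤ ε ^ 2 := sq_nonneg ε
      nlinarith
    -- second part
    set n : ℕ := (K - 1) / d with hn
    have hB : ∑ i ∈ Finset.range K, (if d ≤ i then β / ((i / d : ℕ) : ℝ) else 0)
        ≤ (d : ℝ) * β * Real.log K := by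
      have hBsum : ∑ i ∈ Finset.range K, (if d ≤ i then β / ((i / d : ℕ) : ℝ) else 0)
          = ∑ i ∈ Finset.Ico d K, β / ((i / d : ℕ) : ℝ) := by
        rw [← hfilter1, Finset.sum_ite, Finset.sum_const_zero, add_zero]
      rw [hBsum]
      have hcomp : ∑ i ∈ Finset.Ico d K, β / ((i / d : ℕ) : ℝ)
          = ∑ m ∈ (Finset.Ico d K).image (fun i => i / d),
              ((Finset.Ico d K).filter (fun i => i / d = m)).card • (β / (m : ℝ)) :=
        Finset.sum_comp (fun m : ℕ => β / (m : ℝ)) (fun i => i / d)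
      rw [hcomp]
      have hfibd : ∀ m ∈ (Finset.Ico d K).image (fun i => i / d),
          ((Finset.Ico d K).filter (fun i => i / d = m)).card ≤ d := by
        intro m _
        have hsub : (Finset.Ico d K).filter (fun i => i / d = m) ⊆
            Finset.Ico (m * d) (m * d + d) := by
          intro i hi
          simp only [Finset.mem_filter, Finset.mem_Ico] at hi ⊢
          obtain ⟨⟨h1, h2⟩, h3⟩ := hi
          refine ⟨?_, ?_⟩
          · rw [← h3]
            exact Nat.div_mul_le_self i d
          · have hmod := Nat.mod_lt i hd0
            calc i = d * (i / d) + i % d := (Nat.div_add_mod i d).symm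
              _ < d * (i / d) + d := by omega
              _ = m * d + d := by rw [h3, mul_comm]
        calc ((Finset.Ico d K).filter (fun i => i / d = m)).card
            ≤ (Finset.Ico (m * d) (m * d + d)).card := Finset.card_le_card hsub
          _ = d := by rw [Nat.card_Ico]; omega
      have himg : (Finset.Ico d K).image (fun i => i / d) ⊆ Finset.Icc 1 n := by
        intro m hm
        rw [Finset.mem_image] at hm
        obtain ⟨i, hi, rfl⟩ := hm
        rw [Finset.mem_Ico] at hi
        rw [Finset.mem_Icc]
        constructor
        · rw [Nat.one_le_div_iff hd0]
          exact hi.1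
        · rw [hn]
          exact Nat.div_le_div_right (by omega)
      have hstep1 : ∑ m ∈ (Finset.Ico d K).image (fun i => i / d),
            ((Finset.Ico d K).filter (fun i => i / d = m)).card • (β / (m : ℝ))
          ≤ ∑ m ∈ (Finset.Ico d K).image (fun i => i / d), (d : ℝ) * (β / (m : ℝ)) := by
        refine Finset.sum_le_sum fun m hm => ?_
        rw [nsmul_eq_mul]
        have hnn : (0:ℝ) ≤ β / (m : ℝ) := div_nonneg hβ0 (Nat.cast_nonneg m)
        have := hfibd m hm
        have hcast : (((Finset.Ico d K).filter (fun i => i / d = m)).card : ℝ) ≤ (d : ℝ) :=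
          Nat.cast_le.mpr this
        exact mul_le_mul_of_nonneg_right hcast hnn
      have hstep2 : ∑ m ∈ (Finset.Ico d K).image (fun i => i / d), (d : ℝ) * (β / (m : ℝ))
          ≤ ∑ m ∈ Finset.Icc 1 n, (d : ℝ) * (β / (m : ℝ)) := by
        refine Finset.sum_le_sum_of_subset_of_nonneg himg fun m _ _ => ?_
        positivity
      have hstep3 : ∑ m ∈ Finset.Icc 1 n, (d : ℝ) * (β / (m : ℝ))
          = (d : ℝ) * β * ∑ m ∈ Finset.Icc 1 n, (1 : ℝ) / m := by
        rw [Finset.mul_sum]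
        refine Finset.sum_congr rfl fun m _ => ?_
        ring
      have hharm : ∑ m ∈ Finset.Icc 1 n, (1 : ℝ) / m ≤ Real.log (2 * n + 1) :=
        harmonic_le_log n
      have h2n1 : 2 * n + 1 ≤ K := by
        have h1 : n ≤ (K - 1) / 2 := by
          rw [hn]
          exact Nat.div_le_div_left (by omega) (by norm_num)
        have h2 : (K - 1) / 2 * 2 ≤ K - 1 := Nat.div_mul_le_self _ _
        omega
      have hlog2 : Real.log (2 * n + 1) ≤ Real.log K := by
        apply Real.log_le_log (by positivity)
        exact_mod_cast h2n1
      have hdβ : (0:ℝ) ≤ (d : ℝ) * β := by positivity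
      calc ∑ m ∈ (Finset.Ico d K).image (fun i => i / d),
            ((Finset.Ico d K).filter (fun i => i / d = m)).card • (β / (m : ℝ))
          ≤ ∑ m ∈ Finset.Icc 1 n, (d : ℝ) * (β / (m : ℝ)) := le_trans hstep1 hstep2
        _ = (d : ℝ) * β * ∑ m ∈ Finset.Icc 1 n, (1 : ℝ) / m := hstep3
        _ ≤ (d : ℝ) * β * Real.log (2 * n + 1) := by
            rw [mul_assoc, mul_assoc]
            exact mul_le_mul_of_nonneg_left (mul_le_mul_of_nonneg_left hharm hβ0) (Nat.cast_nonneg d)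
        _ ≤ (d : ℝ) * β * Real.log K := by
            rw [mul_assoc, mul_assoc]
            exact mul_le_mul_of_nonneg_left (mul_le_mul_of_nonneg_left hlog2 hβ0) (Nat.cast_nonneg d)
    calc ∑ t : Fin K, e t ^ 2 = ∑ j : Fin K, v j ^ 2 := hsum2
      _ ≤ ∑ j : Fin K, G (j : ℕ) := hbound
      _ = ∑ i ∈ Finset.range K, G (K - 1 - i) := by rw [hrange, hreflect]
      _ = (∑ i ∈ Finset.range K, (if d ≤ i then ε ^ 2 else C ^ 2))
          + ∑ i ∈ Finset.range K, (if d ≤ i then β / ((i / d : ℕ) : ℝ) else 0) := hsplit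
      _ ≤ ((K : ℝ) * ε ^ 2 + ((min K d : ℕ) : ℝ) * C ^ 2) + (d : ℝ) * β * Real.log K := by
          exact add_le_add hA hB
      _ = (d : ℝ) * β * Real.log K + ((min K d : ℕ) : ℝ) * C ^ 2 + (K : ℝ) * ε ^ 2 := by ring
end

section
/- Let real numbers $\epsilon_{1},\dots,\epsilon_{K} \geq 0$ be assigned to buckets $B_1, \dots, B_{K-1}$ (with possibly some indices unassigned, collected in $B_0$), with $|B_j| \leq d$ for all $j \geq 1$. Then $\sum_{j=1}^{K-1} \frac{j}{|B_j|}\left(\sum_{t \in B_j} \epsilon_t\right)^2 \geq \frac{1}{d(1+\log K)}\left(\sum_{t \in [K] \setminus B_0} \epsilon_t\right)^2$, provided every $B_j$ with $j \geq 1$ appearing in the sum is nonempty. -/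
lemma harm_sum_le (K : ℕ) :
    ∑ j ∈ Finset.Ico 1 (K + 1), (1 : ℝ) / j ≤ 1 + Real.log K := by
  induction K with
  | zero => simp
  | succ n ih =>
    rw [Finset.sum_Ico_succ_top (by omega)]
    rcases Nat.eq_zero_or_pos n with hn | hn
    · subst hn; simp
    · have hlog : (1 : ℝ) / (n + 1) ≤ Real.log (n + 1) - Real.log n := by
        have hn0 : (0 : ℝ) < n := by exact_mod_cast hn
        have hx : (0 : ℝ) < (n : ℝ) / (n + 1) := by positivity
        have := Real.log_le_sub_one_of_pos hx
        rw [Real.log_div (ne_of_gt hn0) (by positivity)] at this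
        have h1 : (n : ℝ) / (n + 1) - 1 = -(1 / (n + 1)) := by
          field_simp
          ring
        linarith
      push_cast at ih ⊢
      linarith

/-- Bucket inequality from the proof of the GEC-style bound: if `B_0, …, B_{K-1}`
partition `[K]`, every bucket `B_j` with `j ≥ 1` has at most `d` elements and is
nonempty, and `ε_t ≥ 0`, then
`∑_{j=1}^{K-1} (j/|B_j|) (∑_{t ∈ B_j} ε_t)² ≥ (∑_{t ∈ [K]∖B_0} ε_t)² / (d(1+log K))`. -/
theorem stmt_14 (K d : ℕ) (hK : 1 ≤ K) (hd : 1 ≤ d)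
    (ε : Fin K → ℝ) (hε : ∀ t, 0 ≤ ε t)
    (B : ℕ → Finset (Fin K))
    (hdisj : ∀ j₁ j₂, j₁ < K → j₂ < K → j₁ ≠ j₂ → Disjoint (B j₁) (B j₂))
    (hcover : ∀ i : Fin K, ∃ j < K, i ∈ B j)
    (hcard : ∀ j, 1 ≤ j → j < K → (B j).card ≤ d)
    (hne : ∀ j, 1 ≤ j → j < K → (B j).Nonempty) :
    (1 / (d * (1 + Real.log K))) * (∑ t ∈ Finset.univ \ B 0, ε t) ^ 2 ≤
      ∑ j ∈ Finset.Ico 1 K, ((j : ℝ) / (B j).card) * (∑ t ∈ B j, ε t) ^ 2 := by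
  set s := Finset.Ico 1 K with hs
  set S : ℕ → ℝ := fun j => ∑ t ∈ B j, ε t with hS
  -- Step A: decompose the sum
  have hunion : Finset.univ \ B 0 = s.biUnion B := by
    ext i
    simp only [Finset.mem_sdiff, Finset.mem_univ, true_and, Finset.mem_biUnion, hs,
      Finset.mem_Ico]
    constructor
    · intro hi
      obtain ⟨j, hjK, hij⟩ := hcover i
      refine ⟨j, ⟨?_, hjK⟩, hij⟩
      by_contra h
      have : j = 0 := by omega
      subst this; exact hi hij
    · rintro ⟨j, ⟨hj1, hjK⟩, hij⟩ hi0
      exact Finset.disjoint_left.mp (hdisj 0 j hK hjK (by omega)) hi0 hij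
  have hpd : (↑s : Set ℕ).PairwiseDisjoint B := by
    intro a ha b hb hab
    simp only [hs, Finset.coe_Ico, Set.mem_Ico] at ha hb
    exact hdisj a b ha.2 hb.2 hab
  have hA : ∑ t ∈ Finset.univ \ B 0, ε t = ∑ j ∈ s, S j := by
    rw [hunion, Finset.sum_biUnion hpd]
  -- Step B: Cauchy-Schwarz
  have hB : (∑ j ∈ s, S j) ^ 2 ≤ (∑ j ∈ s, 1 / (j : ℝ)) * ∑ j ∈ s, (j : ℝ) * (S j) ^ 2 := by
    have := Finset.sum_mul_sq_le_sq_mul_sq s (fun j => Real.sqrt (1 / (j : ℝ)))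
      (fun j => Real.sqrt (j : ℝ) * S j)
    have e1 : ∀ j ∈ s, Real.sqrt (1 / (j : ℝ)) * (Real.sqrt (j : ℝ) * S j) = S j := by
      intro j hj
      simp only [hs, Finset.mem_Ico] at hj
      have hj0 : (0 : ℝ) < j := by exact_mod_cast hj.1
      rw [← mul_assoc, ← Real.sqrt_mul (by positivity)]
      rw [one_div_mul_cancel (ne_of_gt hj0), Real.sqrt_one, one_mul]
    have e2 : ∀ j ∈ s, Real.sqrt (1 / (j : ℝ)) ^ 2 = 1 / (j : ℝ) := by
      intro j hj
      exact Real.sq_sqrt (by positivity)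
    have e3 : ∀ j ∈ s, (Real.sqrt (j : ℝ) * S j) ^ 2 = (j : ℝ) * (S j) ^ 2 := by
      intro j _
      rw [mul_pow, Real.sq_sqrt (by positivity)]
    rw [Finset.sum_congr rfl e1, Finset.sum_congr rfl e2, Finset.sum_congr rfl e3] at this
    exact this
  -- Step C: harmonic bound
  have hC : ∑ j ∈ s, 1 / (j : ℝ) ≤ 1 + Real.log K := by
    calc ∑ j ∈ s, 1 / (j : ℝ) ≤ ∑ j ∈ Finset.Ico 1 (K + 1), 1 / (j : ℝ) := by
          apply Finset.sum_le_sum_of_subset_of_nonneg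
          · exact Finset.Ico_subset_Ico le_rfl (by omega)
          · intro j _ _; positivity
      _ ≤ 1 + Real.log K := harm_sum_le K
  -- Step D: card bound
  have hD : ∑ j ∈ s, (j : ℝ) * (S j) ^ 2 ≤
      d * ∑ j ∈ s, ((j : ℝ) / (B j).card) * (S j) ^ 2 := by
    rw [Finset.mul_sum]
    apply Finset.sum_le_sum
    intro j hj
    simp only [hs, Finset.mem_Ico] at hj
    have hc1 : 1 ≤ (B j).card := Finset.card_pos.mpr (hne j hj.1 hj.2)
    have hcd : (B j).card ≤ d := hcard j hj.1 hj.2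
    have hc0 : (0 : ℝ) < (B j).card := by exact_mod_cast hc1
    have hcdR : ((B j).card : ℝ) ≤ d := by exact_mod_cast hcd
    have key : (j : ℝ) ≤ (d : ℝ) * ((j : ℝ) / (B j).card) := by
      rw [mul_div_assoc', le_div_iff₀ hc0]
      nlinarith [Nat.cast_nonneg j (α := ℝ)]
    rw [← mul_assoc]
    exact mul_le_mul_of_nonneg_right key (sq_nonneg _)
  -- combine
  have hlogK : (0 : ℝ) ≤ Real.log K := Real.log_natCast_nonneg K
  have hpos : (0 : ℝ) < d * (1 + Real.log K) := by
    have : (1 : ℝ) ≤ d := by exact_mod_cast hd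
    nlinarith
  rw [hA, div_mul_eq_mul_div, one_mul, div_le_iff₀ hpos]
  have hRnn : 0 ≤ ∑ j ∈ s, ((j : ℝ) / (B j).card) * (S j) ^ 2 := by
    apply Finset.sum_nonneg
    intro j hj
    simp only [hs, Finset.mem_Ico] at hj
    have hc0 : (0 : ℝ) ≤ (B j).card := by positivity
    exact mul_nonneg (div_nonneg (by positivity) hc0) (sq_nonneg _)
  have hsum_nn : 0 ≤ ∑ j ∈ s, (j : ℝ) * (S j) ^ 2 := by
    apply Finset.sum_nonneg; intro j _; positivity
  calc (∑ j ∈ s, S j) ^ 2 ≤ (1 + Real.log K) * ∑ j ∈ s, (j : ℝ) * (S j) ^ 2 := by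
        refine le_trans hB (mul_le_mul_of_nonneg_right hC hsum_nn)
    _ ≤ (1 + Real.log K) * (d * ∑ j ∈ s, ((j : ℝ) / (B j).card) * (S j) ^ 2) := by
        apply mul_le_mul_of_nonneg_left hD (by linarith)
    _ = (∑ j ∈ s, ((j : ℝ) / (B j).card) * (S j) ^ 2) * (d * (1 + Real.log K)) := by ring
end

section
/- Let $K$ be a real Hilbert space, let $X_1,\dots,X_m \in K$ with $\|X_t\| \leq 1$, let $W_1,\dots,W_m \in K$ with $\|W_t\| \leq 2R'$ for some $R' > 0$. Suppose for some $\epsilon' > 0$ and all $t \in [m]$: $\sum_{i=1}^{t-1} \langle X_i, W_t\rangle^2 \leq \epsilon'^2$ and $|\langle X_t, W_t \rangle| > \epsilon'$. Define $\Sigma_t = \sum_{i=1}^{t-1} X_i X_i^\top + \frac{\epsilon'^2}{4R'^2} I$ (as an operator on $K$). Then $\|W_t\|_{\Sigma_t} \leq \sqrt{2}\epsilon'$ and $\|X_t\|_{\Sigma_t^{-1}}^2 \geq 1/2$ for all $t \in [m]$. -/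
open scoped RealInnerProductSpace

lemma cs_aux {K : Type*} [NormedAddCommGroup K] [InnerProductSpace ℝ K]
    (T : K →L[ℝ] K) (hsymm : ∀ u v : K, ⟪u, T v⟫ = ⟪T u, v⟫)
    (hpos : ∀ u : K, 0 ≤ ⟪u, T u⟫) (u v : K) :
    ⟪u, T v⟫ ^ 2 ≤ ⟪u, T u⟫ * ⟪v, T v⟫ := by
  have h : ∀ x : ℝ, 0 ≤ ⟪v, T v⟫ * (x * x) + (2 * ⟪u, T v⟫) * x + ⟪u, T u⟫ := by
    intro x
    have h0 := hpos (u + x • v)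
    have e : ⟪u + x • v, T (u + x • v)⟫
        = ⟪u, T u⟫ + x * ⟪u, T v⟫ + x * ⟪v, T u⟫ + x ^ 2 * ⟪v, T v⟫ := by
      simp [map_add, map_smul, inner_add_add_self, inner_add_left, inner_add_right,
        real_inner_smul_left, real_inner_smul_right]
      ring
    have hvu : ⟪v, T u⟫ = ⟪u, T v⟫ := by
      rw [hsymm v u, real_inner_comm]
    rw [e, hvu] at h0
    nlinarith [h0]
  have hd := discrim_le_zero h
  rw [discrim] at hd
  nlinarith [hd]

/-- Kernel elliptical argument: in a real Hilbert space, if `‖X_t‖ ≤ 1`,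
`‖W_t‖ ≤ 2R'`, `∑_{i<t} ⟨X_i, W_t⟩² ≤ ε'²` and `|⟨X_t, W_t⟩| > ε'`, then with
`Σ_t = ∑_{i<t} X_i X_iᵀ + (ε'²/4R'²) I` one has `‖W_t‖_{Σ_t} ≤ √2 ε'` and
`‖X_t‖_{Σ_t⁻¹}² ≥ 1/2`. -/
theorem stmt_15 {K : Type*} [NormedAddCommGroup K] [InnerProductSpace ℝ K]
    [CompleteSpace K] (m : ℕ) (R' ε' : ℝ) (hR : 0 < R') (hε : 0 < ε')
    (X W : Fin m → K)
    (hX : ∀ t, ‖X t‖ ≤ 1) (hW : ∀ t, ‖W t‖ ≤ 2 * R')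
    (hsmall : ∀ t : Fin m,
      ∑ i ∈ Finset.univ.filter (fun i => i < t), ⟪X i, W t⟫ ^ 2 ≤ ε' ^ 2)
    (hbig : ∀ t : Fin m, ε' < |⟪X t, W t⟫|)
    (S Sinv : Fin m → K →L[ℝ] K)
    (hS : ∀ t : Fin m, S t =
      (∑ i ∈ Finset.univ.filter (fun i => i < t),
        (innerSL ℝ (X i)).smulRight (X i)) +
        (ε' ^ 2 / (4 * R' ^ 2)) • ContinuousLinearMap.id ℝ K)
    (hSinv : ∀ t, (Sinv t).comp (S t) = ContinuousLinearMap.id ℝ K ∧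
      (S t).comp (Sinv t) = ContinuousLinearMap.id ℝ K) :
    ∀ t : Fin m,
      Real.sqrt ⟪W t, S t (W t)⟫ ≤ Real.sqrt 2 * ε' ∧
        (1 : ℝ) / 2 ≤ ⟪X t, Sinv t (X t)⟫ := by
  intro t
  set c : ℝ := ε' ^ 2 / (4 * R' ^ 2) with hc
  have hcpos : 0 < c := by positivity
  set F := Finset.univ.filter (fun i : Fin m => i < t) with hF
  -- formula for ⟪u, S t v⟫
  have hform : ∀ u v : K, ⟪u, S t v⟫ = (∑ i ∈ F, ⟪X i, v⟫ * ⟪X i, u⟫) + c * ⟪u, v⟫ := by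
    intro u v
    rw [hS t]
    simp only [ContinuousLinearMap.add_apply, ContinuousLinearMap.sum_apply,
      ContinuousLinearMap.smulRight_apply, innerSL_apply_apply, ContinuousLinearMap.smul_apply,
      ContinuousLinearMap.id_apply, inner_add_right, inner_sum, real_inner_smul_right]
    congr 1
    exact Finset.sum_congr rfl fun i _ => by rw [real_inner_comm u (X i)]
  have hsymm : ∀ u v : K, ⟪u, S t v⟫ = ⟪S t u, v⟫ := by
    intro u v
    have h2 := hform v u
    rw [real_inner_comm (S t u) v] at h2
    rw [hform u v, h2, real_inner_comm v u]
    congr 1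
    exact Finset.sum_congr rfl fun i _ => mul_comm _ _
  have hpos : ∀ u : K, 0 ≤ ⟪u, S t u⟫ := by
    intro u
    rw [hform]
    have : 0 ≤ c * ⟪u, u⟫ := mul_nonneg hcpos.le real_inner_self_nonneg
    have h2 : 0 ≤ ∑ i ∈ F, ⟪X i, u⟫ * ⟪X i, u⟫ :=
      Finset.sum_nonneg fun i _ => mul_self_nonneg _
    linarith
  -- bound ⟪W t, S t (W t)⟫ ≤ 2 ε'^2
  have hWb : ⟪W t, S t (W t)⟫ ≤ 2 * ε' ^ 2 := by
    rw [hform]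
    have h1 : ∑ i ∈ F, ⟪X i, W t⟫ * ⟪X i, W t⟫ ≤ ε' ^ 2 := by
      have := hsmall t
      simpa [sq] using this
    have h2 : c * ⟪W t, W t⟫ ≤ ε' ^ 2 := by
      have hn : ⟪W t, W t⟫ ≤ (2 * R') ^ 2 := by
        rw [real_inner_self_eq_norm_sq]
        have := hW t
        nlinarith [norm_nonneg (W t)]
      calc c * ⟪W t, W t⟫ ≤ c * (2 * R') ^ 2 :=
            mul_le_mul_of_nonneg_left hn hcpos.le
        _ = ε' ^ 2 := by rw [hc, div_mul_eq_mul_div, div_eq_iff (by positivity)]; ring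
    linarith
  constructor
  · calc Real.sqrt ⟪W t, S t (W t)⟫ ≤ Real.sqrt (2 * ε' ^ 2) :=
        Real.sqrt_le_sqrt hWb
      _ = Real.sqrt 2 * ε' := by
        rw [Real.sqrt_mul (by norm_num), Real.sqrt_sq hε.le]
  · -- second part via Cauchy-Schwarz
    set u : K := Sinv t (X t) with hu
    have hSu : S t u = X t := by
      have := (hSinv t).2
      have := congrArg (fun f : K →L[ℝ] K => f (X t)) this
      simpa using this
    have hBuW : ⟪u, S t (W t)⟫ = ⟪X t, W t⟫ := by
      rw [hsymm, hSu]
    have hBuu : ⟪u, S t u⟫ = ⟪X t, Sinv t (X t)⟫ := by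
      rw [hSu, real_inner_comm]
    have hcs := cs_aux (S t) hsymm hpos u (W t)
    rw [hBuW, hBuu] at hcs
    have hb := hbig t
    have hb2 : ε' ^ 2 < ⟪X t, W t⟫ ^ 2 := by
      have := sq_abs ⟪X t, W t⟫
      nlinarith [hb, hε]
    have huu : 0 ≤ ⟪X t, Sinv t (X t)⟫ := by rw [← hBuu]; exact hpos u
    nlinarith [hcs, hb2, hWb, huu, hε, sq_nonneg ε']
end
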